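/- Let P be a locally cartesian closed category and L : P → C a locally cartesian reflective localization with fully faithful right adjoint G and unit η. Then for each object T of P, the composite functor η_T* ∘ G_{LT} : C/LT → P/GLT → P/T is fully faithful and right adjoint to the composite (η_T)_! ∘ L_{LT} : P/T → P/GLT → C/LT. -/

import Mathlib

open CategoryTheory CategoryTheory.Limits

/-- For an adjunction `L ⊣ G`, the functor `Over (G.obj c) ⥤ Over c` given by applying `L`
and composing with the counit is left adjoint to `Over.post G`. -/
def postAdj {P C : Type*} [Category P] [Category C] (L : P ⥤ C) (G : C ⥤ P)
    (adj : L ⊣ G) (c : C) :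
    ((Over.post L ⋙ Over.map (adj.counit.app c) : Over (G.obj c) ⥤ Over c) ⊣
      Over.post G) :=
  Adjunction.mkOfHomEquiv
    { homEquiv := fun A Z =>
        { toFun := fun g => Over.homMk (adj.unit.app A.left ≫ G.map g.left) (by
            have := Over.w g
            dsimp at this ⊢
            erw [Category.assoc, ← G.map_comp, this, G.map_comp,
              adj.unit_naturality_assoc, adj.right_triangle_components,
              Category.comp_id])
          invFun := fun f => Over.homMk (L.map f.left ≫ adj.counit.app Z.left) (by
            have := Over.w f
            dsimp at this ⊢
            erw [Category.assoc, ← adj.counit_naturality, ← L.map_comp_assoc, this]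
            rfl)
          left_inv := fun g => by
            ext
            dsimp
            simp
            erw [L.map_comp, Category.assoc, adj.counit_naturality, adj.left_triangle_components_assoc]
          right_inv := fun f => by
            ext
            dsimp
            simp
            erw [G.map_comp, adj.unit_naturality_assoc, adj.right_triangle_components, Category.comp_id] }
      homEquiv_naturality_left_symm := fun f g => by
        ext
        dsimp
        exact (L.map_comp f.left g.left =≫ adj.counit.app _).trans (Category.assoc _ _ _)
      homEquiv_naturality_right := fun f g => by
        ext
        dsimp
        exact (adj.unit.app _ ≫= G.map_comp f.left g.left).trans (Category.assoc _ _ _).symm }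

theorem slice_adjunction {P C : Type*} [Category P] [Category C] [HasPullbacks P]
    (L : P ⥤ C) (G : C ⥤ P) (adj : L ⊣ G) [G.Full] [G.Faithful]
    (hloc : ∀ {T S : C} (f : T ⟶ S) {X Y : P}
      (p : X ⟶ G.obj S) (p' : Y ⟶ G.obj T) (q : Y ⟶ X),
      IsPullback q p' p (G.map f) → IsIso (L.map p) → IsIso (L.map p'))
    (T : P) :
    (Over.post G ⋙ Over.pullback (adj.unit.app T) :
        Over (L.obj T) ⥤ Over T).Full ∧
    (Over.post G ⋙ Over.pullback (adj.unit.app T) :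
        Over (L.obj T) ⥤ Over T).Faithful ∧
    Nonempty ((Over.map (adj.unit.app T) ⋙ Over.post L ⋙
        Over.map (adj.counit.app (L.obj T)) : Over T ⥤ Over (L.obj T)) ⊣
      (Over.post G ⋙ Over.pullback (adj.unit.app T))) := by
  let A : (Over.map (adj.unit.app T) ⋙ Over.post L ⋙
      Over.map (adj.counit.app (L.obj T)) : Over T ⥤ Over (L.obj T)) ⊣
      (Over.post G ⋙ Over.pullback (adj.unit.app T)) :=
    (Over.mapPullbackAdj (adj.unit.app T)).comp (postAdj L G adj (L.obj T))
  have hiso : IsIso A.counit := by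
    rw [NatTrans.isIso_iff_isIso_app]
    intro Z
    -- the `left` component of the counit
    have hη : IsIso (L.map (adj.unit.app T)) := by
      have : L.map (adj.unit.app T) ≫ adj.counit.app (L.obj T) = 𝟙 _ :=
        adj.left_triangle_components T
      exact IsIso.of_isIso_fac_right this
    have hpb : IsPullback (pullback.snd (G.map Z.hom) (adj.unit.app T))
        (pullback.fst (G.map Z.hom) (adj.unit.app T))
        (adj.unit.app T) (G.map Z.hom) :=
      (IsPullback.of_hasPullback (G.map Z.hom) (adj.unit.app T)).flip
    have hfst : IsIso (L.map (pullback.fst (G.map Z.hom) (adj.unit.app T))) :=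
      hloc Z.hom (adj.unit.app T) _ _ hpb hη
    have key : (Over.forget (L.obj T)).map (A.counit.app Z) =
        L.map (pullback.fst (G.map Z.hom) (adj.unit.app T)) ≫ adj.counit.app Z.left := by
      simp [A, Adjunction.comp, postAdj, Over.mapPullbackAdj, Adjunction.mkOfHomEquiv]
      erw [Over.map_map_left, Over.map_map_left, Over.map_map_left]
      exact (Category.id_comp _).trans (L.map _ ≫= ((Category.id_comp _).trans (Category.id_comp _)))
    haveI : IsIso ((Over.forget (L.obj T)).map (A.counit.app Z)) := by
      rw [key]; exact @IsIso.comp_isIso _ _ _ _ _ _ _ hfst (inferInstanceAs (IsIso (adj.counit.app Z.left)))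
    exact isIso_of_reflects_iso _ (Over.forget (L.obj T))
  have ff := A.fullyFaithfulROfIsIsoCounit
  exact ⟨ff.full, ff.faithful, ⟨A⟩⟩
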